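/- arXiv:2510.17678 — 2 statements merged into one kernel-verified Lean document; each statement's English description precedes it below -/
import Mathlib

section
/- Let β = (β₁, β₂) ∈ ℤ¹⁰ × ℤ¹² = ℤ²² satisfy βᵀ·G₂₂·β = −2 (i.e., β is a root of the K3 lattice II_{3,19}). If β₁ᵀ·G₁₀·β₁ < 0, then β₂ᵀ·G₁₂·β₂ ≥ 0. Consequently, if moreover β₂ᵀ·G₁₂·β₂ ≤ 0, then β₁ᵀ·G₁₀·β₁ = −2 and β₂ᵀ·G₁₂·β₂ = 0. (This is the key step showing that, for the unimodular lattice Λ = U ⊕ E₈ primitively embedded in the K3 lattice, the walls of the small cones in Λ_ℝ are exactly the walls of the Weyl chambers of Λ.) -/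
open Matrix

/-- The hyperbolic plane `U`. -/
def Umat : Matrix (Fin 2) (Fin 2) ℤ := !![0, 1; 1, 0]

/-- The negative definite `E₈` Gram matrix: the negative of the Cartan matrix of `E₈`
(chain `0–1–2–3–4–5–6` with node `7` attached to node `2`). -/
def E8neg : Matrix (Fin 8) (Fin 8) ℤ :=
  !![-2,  1,  0,  0,  0,  0,  0,  0;
      1, -2,  1,  0,  0,  0,  0,  0;
      0,  1, -2,  1,  0,  0,  0,  1;
      0,  0,  1, -2,  1,  0,  0,  0;
      0,  0,  0,  1, -2,  1,  0,  0;
      0,  0,  0,  0,  1, -2,  1,  0;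
      0,  0,  0,  0,  0,  1, -2,  0;
      0,  0,  1,  0,  0,  0,  0, -2]

/-- The Gram matrix `G₁₀ = U ⊕ E₈⁻` of `Λ = U ⊕ E₈`. -/
def G10 : Matrix (Fin 10) (Fin 10) ℤ :=
  Matrix.reindex finSumFinEquiv finSumFinEquiv (Matrix.fromBlocks Umat 0 0 E8neg)

/-- The Gram matrix `G₁₂ = U² ⊕ E₈⁻` of `Λ^⊥ = U² ⊕ E₈`. -/
def G12 : Matrix (Fin 12) (Fin 12) ℤ :=
  Matrix.reindex finSumFinEquiv finSumFinEquiv (Matrix.fromBlocks Umat 0 0 G10)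

/-- The Gram matrix `G₂₂ = G₁₀ ⊕ G₁₂` of the K3 lattice `II_{3,19} ≅ U³ ⊕ E₈²`. -/
def G22 : Matrix (Fin 10 ⊕ Fin 12) (Fin 10 ⊕ Fin 12) ℤ := Matrix.fromBlocks G10 0 0 G12

open Finset in
lemma even_quad {n : ℕ} (G : Matrix (Fin n) (Fin n) ℤ)
    (hs : ∀ i j, G i j = G j i) (hd : ∀ i, 2 ∣ G i i) (x : Fin n → ℤ) :
    2 ∣ x ⬝ᵥ G.mulVec x := by
  have hcast : ((x ⬝ᵥ G.mulVec x : ℤ) : ZMod 2) = 0 := by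
    have h1 : (x ⬝ᵥ G.mulVec x : ℤ) = ∑ p ∈ univ ×ˢ univ, x p.1 * G p.1 p.2 * x p.2 := by
      rw [Finset.sum_product]
      simp [dotProduct, Matrix.mulVec, Finset.mul_sum, mul_assoc]
    rw [h1]
    push_cast
    rw [← Finset.diag_union_offDiag (univ : Finset (Fin n)),
      Finset.sum_union (Finset.disjoint_diag_offDiag _), Finset.sum_diag]
    have hdiag : ∀ i : Fin n, ((G i i : ℤ) : ZMod 2) = 0 := fun i =>
      (ZMod.intCast_zmod_eq_zero_iff_dvd _ 2).2 (hd i)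
    simp only [hdiag, mul_zero, zero_mul, Finset.sum_const_zero, zero_add]
    apply Finset.sum_involution (fun p _ => (p.2, p.1))
    · intro p hp
      rw [hs p.2 p.1]
      have : ((x p.1 : ZMod 2) * (G p.1 p.2 : ZMod 2) * (x p.2 : ZMod 2)) +
          ((x p.1 : ZMod 2) * (G p.1 p.2 : ZMod 2) * (x p.2 : ZMod 2)) = 0 :=
        CharTwo.add_self_eq_zero _
      linear_combination this
    · intro p hp h
      simp only [Finset.mem_offDiag] at hp
      intro hc
      exact hp.2.2 (congrArg Prod.snd hc) |>.elim
    · intro p hp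
      simp only [Finset.mem_offDiag] at hp ⊢
      exact ⟨hp.2.1, hp.1, fun h => hp.2.2 h.symm⟩
    · intro p hp; rfl
  exact (ZMod.intCast_zmod_eq_zero_iff_dvd _ 2).mp hcast

/-- If `β = (β₁, β₂)` is a root of the K3 lattice (`β² = -2`) and `β₁² < 0` then `β₂² ≥ 0`;
if moreover `β₂² ≤ 0` then `β₁² = -2` and `β₂² = 0`. -/
theorem statement10 (β₁ : Fin 10 → ℤ) (β₂ : Fin 12 → ℤ)
    (hroot : Sum.elim β₁ β₂ ⬝ᵥ G22.mulVec (Sum.elim β₁ β₂) = -2)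
    (h₁ : β₁ ⬝ᵥ G10.mulVec β₁ < 0) :
    0 ≤ β₂ ⬝ᵥ G12.mulVec β₂ ∧
    (β₂ ⬝ᵥ G12.mulVec β₂ ≤ 0 →
      β₁ ⬝ᵥ G10.mulVec β₁ = -2 ∧ β₂ ⬝ᵥ G12.mulVec β₂ = 0) := by
  have hsplit : β₁ ⬝ᵥ G10.mulVec β₁ + β₂ ⬝ᵥ G12.mulVec β₂ = -2 := by
    rw [← hroot]
    simp [G22, Matrix.fromBlocks_mulVec, sumElim_dotProduct_sumElim]
  obtain ⟨k, hk⟩ := even_quad G10 (by intro i j; fin_cases i <;> fin_cases j <;> decide) (by decide) β₁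
  constructor
  · omega
  · intro h; omega
end

section
/- Let t ∈ ℂ¹¹, let c ∈ ℂ and set ℓ = x + c·w⁶ ∈ ℂ[w,x]. Suppose that ℓ⁴ divides A_t and ℓ⁶ divides B_t in ℂ[w,x]. Then there exist a, b ∈ ℂ such that c = −b/7, A_t = a·ℓ⁴·w⁴, and B_t = ℓ⁶·(ℓ + b·w⁶); moreover the discriminant satisfies the factorization 4·A_t³ + 27·B_t² = ℓ¹²·(4a³·w¹² + 27·(ℓ + b·w⁶)²). -/
open MvPolynomial

/-- For `t = (t₄,t₁₀,t₁₂,t₁₆,t₁₈,t₂₂,t₂₄,t₂₈,t₃₀,t₃₆,t₄₂) ∈ ℂ¹¹` (indexed here by `Fin 11`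
in this order), the coefficient polynomial
`A_t = t₄x⁴w⁴ + t₁₀x³w¹⁰ + t₁₆x²w¹⁶ + t₂₂xw²² + t₂₈w²⁸ ∈ ℂ[w,x]`,
with `w = X 0` and `x = X 1`. -/
noncomputable def At (t : Fin 11 → ℂ) : MvPolynomial (Fin 2) ℂ :=
  C (t 0) * X 1 ^ 4 * X 0 ^ 4 + C (t 1) * X 1 ^ 3 * X 0 ^ 10 +
  C (t 3) * X 1 ^ 2 * X 0 ^ 16 + C (t 5) * X 1 * X 0 ^ 22 + C (t 7) * X 0 ^ 28

/-- The coefficient polynomial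
`B_t = x⁷ + t₁₂x⁵w¹² + t₁₈x⁴w¹⁸ + t₂₄x³w²⁴ + t₃₀x²w³⁰ + t₃₆xw³⁶ + t₄₂w⁴² ∈ ℂ[w,x]`. -/
noncomputable def Bt (t : Fin 11 → ℂ) : MvPolynomial (Fin 2) ℂ :=
  X 1 ^ 7 + C (t 2) * X 1 ^ 5 * X 0 ^ 12 + C (t 4) * X 1 ^ 4 * X 0 ^ 18 +
  C (t 6) * X 1 ^ 3 * X 0 ^ 24 + C (t 8) * X 1 ^ 2 * X 0 ^ 30 +
  C (t 9) * X 1 * X 0 ^ 36 + C (t 10) * X 0 ^ 42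

/-- If `ℓ = x + c·w⁶` satisfies `ℓ⁴ ∣ A_t` and `ℓ⁶ ∣ B_t`, then `c = -b/7`,
`A_t = a·ℓ⁴·w⁴` and `B_t = ℓ⁶·(ℓ + b·w⁶)` for some `a, b ∈ ℂ`, and the discriminant
factors as `4A_t³ + 27B_t² = ℓ¹²·(4a³w¹² + 27(ℓ + bw⁶)²)`. -/
theorem statement13 (t : Fin 11 → ℂ) (c : ℂ) (l : MvPolynomial (Fin 2) ℂ)
    (hl : l = X 1 + C c * X 0 ^ 6)
    (hA : l ^ 4 ∣ At t) (hB : l ^ 6 ∣ Bt t) :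
    ∃ a b : ℂ, c = -b / 7 ∧
      At t = C a * l ^ 4 * X 0 ^ 4 ∧
      Bt t = l ^ 6 * (l + C b * X 0 ^ 6) ∧
      4 * At t ^ 3 + 27 * Bt t ^ 2 =
        l ^ 12 * (4 * C a ^ 3 * X 0 ^ 12 + 27 * (l + C b * X 0 ^ 6) ^ 2) := by
  -- specialize w ↦ 1, x ↦ X - C c, so that l ↦ X
  set φ : MvPolynomial (Fin 2) ℂ →ₐ[ℂ] Polynomial ℂ :=
    aeval ![(1 : Polynomial ℂ), Polynomial.X - Polynomial.C c] with hφ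
  have hφl : φ l = Polynomial.X := by
    simp [hl, hφ, Polynomial.algebraMap_eq]
  have hφA : Polynomial.X ^ 4 ∣ φ (At t) := by
    simpa [map_pow, hφl] using map_dvd φ hA
  have hφB : Polynomial.X ^ 6 ∣ φ (Bt t) := by
    simpa [map_pow, hφl] using map_dvd φ hB
  have hEA : φ (At t) =
      Polynomial.C (t 0 * c ^ 4 - t 1 * c ^ 3 + t 3 * c ^ 2 - t 5 * c + t 7) +
      Polynomial.C (-4 * t 0 * c ^ 3 + 3 * t 1 * c ^ 2 - 2 * t 3 * c + t 5) * Polynomial.X +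
      Polynomial.C (6 * t 0 * c ^ 2 - 3 * t 1 * c + t 3) * Polynomial.X ^ 2 +
      Polynomial.C (-4 * t 0 * c + t 1) * Polynomial.X ^ 3 +
      Polynomial.C (t 0) * Polynomial.X ^ 4 := by
    simp only [At, hφ, map_add, map_mul, map_pow, map_sub, map_neg, map_ofNat, aeval_X, aeval_C,
      Polynomial.algebraMap_eq, Matrix.cons_val_zero, Matrix.cons_val_one, Matrix.head_cons]
    ring
  have hEB : φ (Bt t) =
      Polynomial.C (-c ^ 7 - t 2 * c ^ 5 + t 4 * c ^ 4 - t 6 * c ^ 3 + t 8 * c ^ 2 - t 9 * c + t 10) +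
      Polynomial.C (7 * c ^ 6 + 5 * t 2 * c ^ 4 - 4 * t 4 * c ^ 3 + 3 * t 6 * c ^ 2 - 2 * t 8 * c + t 9) * Polynomial.X +
      Polynomial.C (-21 * c ^ 5 - 10 * t 2 * c ^ 3 + 6 * t 4 * c ^ 2 - 3 * t 6 * c + t 8) * Polynomial.X ^ 2 +
      Polynomial.C (35 * c ^ 4 + 10 * t 2 * c ^ 2 - 4 * t 4 * c + t 6) * Polynomial.X ^ 3 +
      Polynomial.C (-35 * c ^ 3 - 5 * t 2 * c + t 4) * Polynomial.X ^ 4 +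
      Polynomial.C (21 * c ^ 2 + t 2) * Polynomial.X ^ 5 +
      Polynomial.C (-7 * c) * Polynomial.X ^ 6 + Polynomial.X ^ 7 := by
    simp only [Bt, hφ, map_add, map_mul, map_pow, map_sub, map_neg, map_ofNat, aeval_X, aeval_C,
      Polynomial.algebraMap_eq, Matrix.cons_val_zero, Matrix.cons_val_one, Matrix.head_cons]
    ring
  rw [hEA, Polynomial.X_pow_dvd_iff] at hφA
  rw [hEB, Polynomial.X_pow_dvd_iff] at hφB
  have qA0 := hφA 0 (by norm_num)
  have qA1 := hφA 1 (by norm_num)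
  have qA2 := hφA 2 (by norm_num)
  have qA3 := hφA 3 (by norm_num)
  have qB0 := hφB 0 (by norm_num)
  have qB1 := hφB 1 (by norm_num)
  have qB2 := hφB 2 (by norm_num)
  have qB3 := hφB 3 (by norm_num)
  have qB4 := hφB 4 (by norm_num)
  have qB5 := hφB 5 (by norm_num)
  simp only [Polynomial.coeff_add, Polynomial.coeff_C_mul, Polynomial.coeff_C,
    Polynomial.coeff_X_pow, Polynomial.coeff_X, Polynomial.coeff_one] at qA0 qA1 qA2 qA3 qB0 qB1 qB2 qB3 qB4 qB5
  norm_num at qA0 qA1 qA2 qA3 qB0 qB1 qB2 qB3 qB4 qB5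
  -- solve the triangular systems
  have e1 : t 1 = 4 * t 0 * c := by linear_combination qA3
  have e3 : t 3 = 6 * t 0 * c ^ 2 := by linear_combination qA2 + 3 * c * qA3
  have e5 : t 5 = 4 * t 0 * c ^ 3 := by
    linear_combination qA1 + 2 * c * qA2 + 3 * c ^ 2 * qA3
  have e7 : t 7 = t 0 * c ^ 4 := by
    linear_combination qA0 + c * qA1 + c ^ 2 * qA2 + c ^ 3 * qA3
  have f2 : t 2 = -21 * c ^ 2 := by linear_combination qB5
  have f4 : t 4 = -70 * c ^ 3 := by linear_combination qB4 + 5 * c * qB5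
  have f6 : t 6 = -105 * c ^ 4 := by
    linear_combination qB3 + 4 * c * qB4 + 10 * c ^ 2 * qB5
  have f8 : t 8 = -84 * c ^ 5 := by
    linear_combination qB2 + 3 * c * qB3 + 6 * c ^ 2 * qB4 + 10 * c ^ 3 * qB5
  have f9 : t 9 = -35 * c ^ 6 := by
    linear_combination qB1 + 2 * c * qB2 + 3 * c ^ 2 * qB3 + 4 * c ^ 3 * qB4 + 5 * c ^ 4 * qB5
  have f10 : t 10 = -6 * c ^ 7 := by
    linear_combination qB0 + c * qB1 + c ^ 2 * qB2 + c ^ 3 * qB3 + c ^ 4 * qB4 + c ^ 5 * qB5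
  refine ⟨t 0, -7 * c, by ring, ?_, ?_, ?_⟩
  · rw [At, e1, e3, e5, e7, hl]
    simp only [map_mul, map_add, map_pow, map_neg, map_ofNat]
    ring
  · rw [Bt, f2, f4, f6, f8, f9, f10, hl]
    simp only [map_mul, map_add, map_pow, map_neg, map_ofNat]
    ring
  · have hAeq : At t = C (t 0) * l ^ 4 * X 0 ^ 4 := by
      rw [At, e1, e3, e5, e7, hl]
      simp only [map_mul, map_add, map_pow, map_neg, map_ofNat]
      ring
    have hBeq : Bt t = l ^ 6 * (l + C (-7 * c) * X 0 ^ 6) := by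
      rw [Bt, f2, f4, f6, f8, f9, f10, hl]
      simp only [map_mul, map_add, map_pow, map_neg, map_ofNat]
      ring
    rw [hAeq, hBeq]; ring
end
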